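/- For α, β > -1 and n ≥ 1, the functionals μ_n on polynomials defined by μ_n(e_0) = 1 and, for k ≥ 1, μ_n(e_k) = Σ_{j=0}^{k-1} s_{k-j}(k,α)·n^j/((n+α+β+2)^{(k)} - n^k)·μ_n(e_j) — where s_{k-j}(k,α) is the elementary symmetric polynomial of degree k-j in α+1, α+2, ..., α+k — satisfy lim_{n→∞} μ_n(e_k) = (2α+2)^{(k)}/(2α+2β+4)^{(k)} for every k ≥ 0. -/

import Mathlib

open MeasureTheory intervalIntegral Filter

/-- The Beta operator with Jacobi weights: `B_n^{α,β}(f;x)`. -/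
noncomputable def Bop (n α β : ℝ) (f : ℝ → ℝ) (x : ℝ) : ℝ :=
  (∫ t in (0:ℝ)..1, t ^ (n * x + α) * (1 - t) ^ (n - n * x + β) * f t) /
  (∫ t in (0:ℝ)..1, t ^ (n * x + α) * (1 - t) ^ (n - n * x + β))

/-- The `m`-th central moment `T_{n,m}^{α,β}(x)`. -/
noncomputable def T (n α β : ℝ) (m : ℕ) (x : ℝ) : ℝ :=
  Bop n α β (fun t => (t - x) ^ m) x


/-- The Beta operator extended to the limiting cases `α = -1` (interpolation at `0`)
and `β = -1` (interpolation at `1`). -/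
noncomputable def BopE (n α β : ℝ) (f : ℝ → ℝ) (x : ℝ) : ℝ :=
  if α = -1 ∧ x = 0 then f 0
  else if β = -1 ∧ x = 1 then f 1
  else Bop n α β f x

/-- The `m`-th central moment of the extended Beta operator. -/
noncomputable def TE (n α β : ℝ) (m : ℕ) (x : ℝ) : ℝ :=
  BopE n α β (fun t => (t - x) ^ m) x
/-- `s_r(k,α)`: elementary symmetric sum of degree `r` of `α+1, …, α+k`. -/
noncomputable def esymmS (α : ℝ) (k r : ℕ) : ℝ :=
  (((Finset.range k).val.map fun i => α + i + 1).esymm r)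


private lemma asc_eval_prod (k : ℕ) (x : ℝ) :
    (ascPochhammer ℝ k).eval x = ∏ i ∈ Finset.range k, (x + i) := by
  induction k with
  | zero => simp
  | succ n ih => rw [ascPochhammer_succ_eval, ih, Finset.prod_range_succ]

private lemma esymmS_one (α : ℝ) (k : ℕ) :
    esymmS α k 1 = ∑ i ∈ Finset.range k, (α + i + 1) := by
  simp [esymmS, Multiset.esymm, Multiset.powersetCard_one, Multiset.map_map,
    Function.comp, Finset.sum]

private lemma sum_range_cast (n : ℕ) :
    ∑ i ∈ Finset.range n, (i : ℝ) = n * (n - 1) / 2 := by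
  induction n with
  | zero => simp
  | succ m ih => rw [Finset.sum_range_succ, ih]; push_cast; ring

private lemma Dlim (c : ℝ) : ∀ k : ℕ, 1 ≤ k →
    Tendsto (fun n : ℕ =>
      ((∏ i ∈ Finset.range k, ((n : ℝ) + c + i)) - (n : ℝ) ^ k) / (n : ℝ) ^ (k - 1))
      atTop (nhds ((k : ℝ) * c + (k : ℝ) * ((k : ℝ) - 1) / 2)) := by
  intro k
  induction k with
  | zero => omega
  | succ m ih =>
    intro _
    rcases Nat.eq_zero_or_pos m with hm | hm
    · subst hm
      have h : ∀ n : ℕ, ((∏ i ∈ Finset.range 1, ((n : ℝ) + c + i)) - (n : ℝ) ^ 1) /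
          (n : ℝ) ^ (1 - 1) = c := by
        intro n; simp
      have : (((1:ℕ) : ℝ) * c + ((1:ℕ) : ℝ) * (((1:ℕ) : ℝ) - 1) / 2) = c := by push_cast; ring
      rw [this]
      exact Tendsto.congr (fun n => (h n).symm) tendsto_const_nhds
    · obtain ⟨p, rfl⟩ : ∃ p, m = p + 1 := ⟨m - 1, by omega⟩
      have ihm := ih (by omega)
      have h1 : Tendsto (fun n : ℕ => 1 + (c + (p + 1 : ℕ)) / (n : ℝ)) atTop (nhds 1) := by
        have := (tendsto_const_div_atTop_nhds_zero_nat (c + (p + 1 : ℕ))).const_add 1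
        simpa using this
      have hg : Tendsto (fun n : ℕ =>
          (1 + (c + (p + 1 : ℕ)) / (n : ℝ)) *
            (((∏ i ∈ Finset.range (p + 1), ((n : ℝ) + c + i)) - (n : ℝ) ^ (p + 1)) /
              (n : ℝ) ^ (p + 1 - 1)) + (c + (p + 1 : ℕ))) atTop
          (nhds (1 * (((p+1:ℕ) : ℝ) * c + ((p+1:ℕ) : ℝ) * (((p+1:ℕ) : ℝ) - 1) / 2)
            + (c + (p + 1 : ℕ)))) := (h1.mul ihm).add tendsto_const_nhds
      have hval : (1 * (((p+1:ℕ) : ℝ) * c + ((p+1:ℕ) : ℝ) * (((p+1:ℕ) : ℝ) - 1) / 2)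
            + (c + (p + 1 : ℕ))) =
          (((p+1+1:ℕ) : ℝ) * c + ((p+1+1:ℕ) : ℝ) * (((p+1+1:ℕ) : ℝ) - 1) / 2) := by
        push_cast; ring
      rw [hval] at hg
      apply Tendsto.congr' _ hg
      filter_upwards [eventually_ge_atTop 1] with n hn
      have hn0 : (n : ℝ) ≠ 0 := by positivity
      rw [Finset.prod_range_succ (fun i : ℕ => (n : ℝ) + c + i) (p + 1)]
      simp only [Nat.add_sub_cancel]
      generalize (∏ i ∈ Finset.range (p + 1), ((n : ℝ) + c + i)) = P
      push_cast
      field_simp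
      ring

private lemma key_frac (Pa Pb u v t : ℝ) (hPb : Pb ≠ 0) (hv : v ≠ 0) (ht : t ≠ 0) :
    Pa * u / (Pb * v) = t * u / 2 * (t * v / 2)⁻¹ * (Pa / Pb) := by
  field_simp

theorem mu_n_limit (α β : ℝ) (hα : α > -1) (hβ : β > -1)
    (μ : ℕ → ℕ → ℝ) (hμ0 : ∀ n : ℕ, 1 ≤ n → μ n 0 = 1)
    (hrec : ∀ n : ℕ, 1 ≤ n → ∀ k : ℕ, 1 ≤ k →
      μ n k = ∑ j ∈ Finset.range k,
        esymmS α k (k - j) * (n : ℝ) ^ j /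
            ((ascPochhammer ℝ k).eval ((n : ℝ) + α + β + 2) - (n : ℝ) ^ k) * μ n j) :
    ∀ k : ℕ,
      Filter.Tendsto (fun n : ℕ => μ n k) Filter.atTop
        (nhds ((ascPochhammer ℝ k).eval (2 * α + 2) /
          (ascPochhammer ℝ k).eval (2 * α + 2 * β + 4))) := by
  intro k
  induction k using Nat.strong_induction_on with
  | _ k ih => ?_
  cases k with
  | zero =>
    have h1 : ((ascPochhammer ℝ 0).eval (2 * α + 2) /
        (ascPochhammer ℝ 0).eval (2 * α + 2 * β + 4)) = 1 := by simp
    rw [h1]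
    apply Tendsto.congr' _ tendsto_const_nhds
    filter_upwards [eventually_ge_atTop 1] with n hn
    exact (hμ0 n hn).symm
  | succ m =>
    have hm0 : (0:ℝ) ≤ (m:ℝ) := Nat.cast_nonneg m
    set c : ℝ := α + β + 2 with hc
    have hDlim := Dlim c (m + 1) (by omega)
    set L : ℝ := ((m+1 : ℕ) : ℝ) * c + ((m+1 : ℕ) : ℝ) * (((m+1 : ℕ) : ℝ) - 1) / 2 with hLdef
    have hLpos : 0 < L := by
      rw [hLdef, hc]; push_cast; nlinarith
    have hLne : L ≠ 0 := hLpos.ne'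
    set D : ℕ → ℝ := fun n =>
      (ascPochhammer ℝ (m+1)).eval ((n : ℝ) + α + β + 2) - (n : ℝ) ^ (m+1) with hDdef
    have hD : Tendsto (fun n : ℕ => D n / (n : ℝ) ^ m) atTop (nhds L) := by
      apply Tendsto.congr _ hDlim
      intro n
      have hprod : (∏ i ∈ Finset.range (m+1), ((n : ℝ) + c + i)) =
          (ascPochhammer ℝ (m+1)).eval ((n : ℝ) + α + β + 2) := by
        rw [asc_eval_prod]
        exact Finset.prod_congr rfl fun i _ => by rw [hc]; ring
      rw [hDdef]
      simp only [hprod, Nat.add_sub_cancel]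
    have hInv : Tendsto (fun n : ℕ => (n : ℝ) ^ m / D n) atTop (nhds L⁻¹) := by
      have := hD.inv₀ hLne
      simpa only [inv_div] using this
    set Rm : ℝ := (ascPochhammer ℝ m).eval (2 * α + 2) /
      (ascPochhammer ℝ m).eval (2 * α + 2 * β + 4) with hRm
    have hterm : ∀ j < m + 1,
        Tendsto (fun n : ℕ => esymmS α (m+1) (m+1-j) * (n : ℝ) ^ j / D n * μ n j) atTop
          (nhds (if j = m then esymmS α (m+1) 1 * L⁻¹ * Rm else 0)) := by
      intro j hj
      rcases eq_or_lt_of_le (Nat.lt_succ_iff.mp hj) with hjm | hjm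
      · rw [hjm, if_pos rfl, show m + 1 - m = 1 by omega]
        have h := ((tendsto_const_nhds (x := esymmS α (m+1) 1)).mul hInv).mul (ih m (by omega))
        apply Tendsto.congr _ h
        intro n
        rw [mul_div_assoc]
      · rw [if_neg hjm.ne]
        have h0 : Tendsto (fun n : ℕ => ((n : ℝ)⁻¹) ^ (m - j)) atTop (nhds 0) := by
          have h := (tendsto_inv_atTop_nhds_zero_nat (𝕜 := ℝ)).pow (m - j)
          simpa [zero_pow (show m - j ≠ 0 by omega)] using h
        have hmain := ((tendsto_const_nhds (x := esymmS α (m+1) (m+1-j))).mul (h0.mul hInv)).mul (ih j (by omega))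
        rw [show esymmS α (m+1) (m+1-j) * (0 * L⁻¹) *
            ((ascPochhammer ℝ j).eval (2 * α + 2) /
              (ascPochhammer ℝ j).eval (2 * α + 2 * β + 4)) = 0 by ring] at hmain
        apply Tendsto.congr' _ hmain
        filter_upwards [eventually_ge_atTop 1] with n hn
        have hn0 : (n : ℝ) ≠ 0 := by positivity
        have hx : ((n : ℝ)⁻¹) ^ (m - j) * ((n : ℝ) ^ m / D n) = (n : ℝ) ^ j / D n := by
          have hm' : (n : ℝ) ^ m = (n : ℝ) ^ (m - j) * (n : ℝ) ^ j := by
            rw [← pow_add]; congr 1; omega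
          rw [hm', inv_pow, mul_div_assoc, ← mul_assoc,
            inv_mul_cancel₀ (pow_ne_zero _ hn0), one_mul]
        rw [hx, mul_div_assoc]
    have hsumlim : Tendsto (fun n : ℕ => ∑ j ∈ Finset.range (m+1),
        esymmS α (m+1) (m+1-j) * (n : ℝ) ^ j / D n * μ n j) atTop
        (nhds (esymmS α (m+1) 1 * L⁻¹ * Rm)) := by
      have h := tendsto_finset_sum (Finset.range (m+1))
        (fun j hj => hterm j (Finset.mem_range.mp hj))
      have hsum : ∑ j ∈ Finset.range (m+1),
          (if j = m then esymmS α (m+1) 1 * L⁻¹ * Rm else 0) =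
          esymmS α (m+1) 1 * L⁻¹ * Rm := by
        rw [Finset.sum_ite_eq' (Finset.range (m+1)) m
          (fun _ => esymmS α (m+1) 1 * L⁻¹ * Rm)]
        simp
      rwa [hsum] at h
    -- value identity
    have hs1 : esymmS α (m+1) 1 = ((m+1 : ℕ) : ℝ) * (2 * α + 2 + (m : ℝ)) / 2 := by
      rw [esymmS_one, Finset.sum_add_distrib, Finset.sum_add_distrib, Finset.sum_const,
        Finset.sum_const, sum_range_cast, Finset.card_range]
      push_cast
      ring
    have hLeq : L = ((m+1 : ℕ) : ℝ) * (2 * α + 2 * β + 4 + (m : ℝ)) / 2 := by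
      rw [hLdef, hc]; push_cast; ring
    have hb : (0:ℝ) < 2 * α + 2 * β + 4 := by linarith
    have hPb : (ascPochhammer ℝ m).eval (2 * α + 2 * β + 4) ≠ 0 :=
      (ascPochhammer_pos m _ hb).ne'
    have hv : 2 * α + 2 * β + 4 + (m : ℝ) ≠ 0 := by positivity
    have ht : ((m+1 : ℕ) : ℝ) ≠ 0 := Nat.cast_ne_zero.mpr (by omega)
    have hkey : (ascPochhammer ℝ (m+1)).eval (2 * α + 2) /
        (ascPochhammer ℝ (m+1)).eval (2 * α + 2 * β + 4) =
        esymmS α (m+1) 1 * L⁻¹ * Rm := by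
      rw [ascPochhammer_succ_eval, ascPochhammer_succ_eval, hs1, hLeq, hRm]
      exact key_frac _ _ _ _ _ hPb hv ht
    rw [hkey]
    apply Tendsto.congr' _ hsumlim
    filter_upwards [eventually_ge_atTop 1] with n hn
    rw [hrec n hn (m+1) (by omega)]
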